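/- For every i with 0 ≤ 2i ≤ n, the topological closure in Mat_n(ℂ) of the set {M : Mᵀ = −M and rank M = 2i} of skew-symmetric matrices of rank exactly 2i equals the set {M : Mᵀ = −M and rank M ≤ 2i} of skew-symmetric matrices of rank at most 2i. (Thus the rank strata give a stratification of the space of skew-symmetric matrices by closed subsets.) -/

import Mathlib

open Matrix

set_option linter.unusedSectionVars false
set_option linter.unnecessarySimpa false

section AuxLemmas
open Module Submodule

section Helpers -- variables

variable {κ κ₁ κ₂ : Type*} [Fintype κ] [Fintype κ₁] [Fintype κ₂]
  [DecidableEq κ] [DecidableEq κ₁] [DecidableEq κ₂]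

lemma aux_isUnit_det_of_rank_eq_card (A : Matrix κ κ ℂ) (h : A.rank = Fintype.card κ) :
    IsUnit A.det := by
  rw [← Matrix.isUnit_iff_isUnit_det, ← Matrix.mulVec_surjective_iff_isUnit]
  have htop : LinearMap.range A.mulVecLin = ⊤ := by
    apply Submodule.eq_top_of_finrank_eq
    rw [show Module.finrank ℂ (LinearMap.range A.mulVecLin) = A.rank from rfl, h]
    simp [Module.finrank_pi]
  intro v
  obtain ⟨w, hw⟩ := htop ▸ Submodule.mem_top (x := v)
  exact ⟨w, hw⟩

/-- finrank of a product submodule -/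
lemma aux_finrank_prod {V V' : Type*} [AddCommGroup V] [AddCommGroup V'] [Module ℂ V]
    [Module ℂ V'] [FiniteDimensional ℂ V] [FiniteDimensional ℂ V']
    (p : Submodule ℂ V) (q : Submodule ℂ V') :
    Module.finrank ℂ (p.prod q) = Module.finrank ℂ p + Module.finrank ℂ q := by
  have e : (p.prod q) ≃ₗ[ℂ] p × q :=
    { toFun := fun x => (⟨(x : V × V').1, x.2.1⟩, ⟨(x : V × V').2, x.2.2⟩)
      invFun := fun y => ⟨(y.1, y.2), ⟨y.1.2, y.2.2⟩⟩
      map_add' := fun a b => rfl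
      map_smul' := fun c a => rfl
      left_inv := fun a => rfl
      right_inv := fun a => rfl }
  rw [e.finrank_eq, Module.finrank_prod]

lemma aux_rank_fromBlocks_diag (A : Matrix κ₁ κ₁ ℂ) (D : Matrix κ₂ κ₂ ℂ) :
    (Matrix.fromBlocks A 0 0 D).rank = A.rank + D.rank := by
  classical
  let E := LinearEquiv.sumArrowLequivProdArrow κ₁ κ₂ ℂ ℂ
  have key : (Matrix.fromBlocks A 0 0 D).mulVecLin
      = E.symm.toLinearMap ∘ₗ (A.mulVecLin.prodMap D.mulVecLin) ∘ₗ E.toLinearMap := by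
    apply LinearMap.ext
    intro v
    funext x
    rcases x with i | j <;>
      simp [E, Matrix.mulVecLin_apply, Matrix.mulVec, dotProduct, Fintype.sum_sum_type,
        LinearEquiv.sumArrowLequivProdArrow, Matrix.fromBlocks]
  have hrange : LinearMap.range ((A.mulVecLin.prodMap D.mulVecLin))
      = (LinearMap.range A.mulVecLin).prod (LinearMap.range D.mulVecLin) := by
    ext ⟨x, y⟩
    simp only [LinearMap.mem_range, Submodule.mem_prod, LinearMap.prodMap_apply, Prod.mk.injEq]
    constructor
    · rintro ⟨⟨a, b⟩, ha, hb⟩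
      exact ⟨⟨a, ha⟩, ⟨b, hb⟩⟩
    · rintro ⟨⟨a, ha⟩, ⟨b, hb⟩⟩
      exact ⟨⟨a, b⟩, ha, hb⟩
  rw [Matrix.rank, key, LinearMap.range_comp,
    LinearMap.range_comp_of_range_eq_top _ (LinearEquiv.range E), hrange,
    LinearEquiv.finrank_map_eq, aux_finrank_prod]
  rfl




lemma aux_rank_submatrix_le {m₁ n₁ m₂ n₂ : Type*} [Fintype m₁] [Fintype n₁] [Fintype m₂]
    [Fintype n₂] [DecidableEq m₁] [DecidableEq n₁] (A : Matrix m₁ n₁ ℂ)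
    (f : m₂ → m₁) (g : n₂ → n₁) : (A.submatrix f g).rank ≤ A.rank := by
  have h1 : A.submatrix f g
      = (1 : Matrix m₁ m₁ ℂ).submatrix f id * (A * (1 : Matrix n₁ n₁ ℂ).submatrix id g) := by
    ext x y
    simp [Matrix.mul_apply, Matrix.one_apply, Finset.sum_ite_eq, Finset.sum_ite_eq']
  rw [h1]
  exact le_trans (Matrix.rank_mul_le_right _ _) (Matrix.rank_mul_le_left _ _)

lemma aux_exists_cols {m₁ n₁ : Type*} [Fintype m₁] [Fintype n₁] [DecidableEq n₁]
    (A : Matrix m₁ n₁ ℂ) {k : ℕ} (hk : k ≤ A.rank) :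
    ∃ g : Fin k → n₁, (A.submatrix id g).rank = k := by
  classical
  obtain ⟨t, hts, hspan, hli⟩ := exists_linearIndependent ℂ (Set.range Aᵀ)
  have htfin : t.Finite := (Set.finite_range Aᵀ).subset hts
  haveI : Fintype t := htfin.fintype
  have hcard : A.rank = Fintype.card t := by
    rw [Matrix.rank_eq_finrank_span_cols]
    change finrank ℂ (span ℂ (Set.range Aᵀ)) = _
    rw [← hspan, finrank_span_set_eq_card hli,
      Set.toFinset_card]
  have hk' : k ≤ Fintype.card t := hcard ▸ hk
  let e := (Fintype.equivFin t).symm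
  let w : Fin k → (m₁ → ℂ) := fun j => (e (Fin.castLE hk' j) : m₁ → ℂ)
  have hw_li : LinearIndependent ℂ w :=
    hli.comp (fun j => e (Fin.castLE hk' j))
      (e.injective.comp (Fin.castLE_injective hk'))
  have hw_mem : ∀ j, ∃ y : n₁, Aᵀ y = w j := fun j => hts (e (Fin.castLE hk' j)).2
  choose g hg using hw_mem
  refine ⟨g, ?_⟩
  have hcols : (A.submatrix id g)ᵀ = w ∘ (fun j => j) := by
    funext j
    exact hg j
  rw [Matrix.rank_eq_finrank_span_cols]
  change finrank ℂ (span ℂ (Set.range (A.submatrix id g)ᵀ)) = k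
  rw [hcols]
  rw [show (w ∘ fun j => j) = w from rfl]
  rw [finrank_span_eq_card hw_li, Fintype.card_fin]

lemma aux_exists_minor {n : ℕ} {k : ℕ} (A : Matrix (Fin n) (Fin n) ℂ) (h : k ≤ A.rank) :
    ∃ f g : Fin k → Fin n, IsUnit (A.submatrix f g).det := by
  obtain ⟨g, hg⟩ := aux_exists_cols A h
  have h2 : k ≤ ((A.submatrix id g)ᵀ).rank := by rw [Matrix.rank_transpose, hg]
  obtain ⟨f, hf⟩ := aux_exists_cols _ h2
  refine ⟨f, g, ?_⟩
  have heq : ((A.submatrix id g)ᵀ).submatrix id f = (A.submatrix f g)ᵀ := by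
    ext x y
    simp
  rw [heq, Matrix.rank_transpose] at hf
  apply aux_isUnit_det_of_rank_eq_card _ (by simpa using hf)

lemma aux_isClosed_rank_le (n k : ℕ) :
    IsClosed {M : Matrix (Fin n) (Fin n) ℂ | M.rank ≤ k} := by
  have hset : {M : Matrix (Fin n) (Fin n) ℂ | M.rank ≤ k}
      = ⋂ (f : Fin (k+1) → Fin n), ⋂ (g : Fin (k+1) → Fin n),
          {M | (M.submatrix f g).det = 0} := by
    ext M
    simp only [Set.mem_setOf_eq, Set.mem_iInter]
    constructor
    · intro hM f g
      by_contra hd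
      have hu : IsUnit (M.submatrix f g) :=
        (Matrix.isUnit_iff_isUnit_det _).mpr (isUnit_iff_ne_zero.mpr hd)
      have hr := Matrix.rank_of_isUnit _ hu
      have hle := aux_rank_submatrix_le M f g
      rw [hr] at hle
      simp only [Fintype.card_fin] at hle
      omega
    · intro hall
      by_contra hM
      push_neg at hM
      obtain ⟨f, g, hu⟩ := aux_exists_minor M (by omega : k + 1 ≤ M.rank)
      rw [hall f g] at hu
      simpa using hu
  rw [hset]
  refine isClosed_iInter fun f => isClosed_iInter fun g => ?_
  exact isClosed_eq ((continuous_id.matrix_submatrix f g).matrix_det) continuous_const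


lemma aux_fromBlocks_skew {κ₁ κ₂ : Type*} (X₁ : Matrix κ₁ κ₁ ℂ) (X₂ : Matrix κ₂ κ₂ ℂ)
    (h1 : X₁ᵀ = -X₁) (h2 : X₂ᵀ = -X₂) :
    (Matrix.fromBlocks X₁ 0 0 X₂)ᵀ = -(Matrix.fromBlocks X₁ 0 0 X₂) := by
  rw [Matrix.fromBlocks_transpose, h1, h2]
  ext x y
  rcases x with x | x <;> rcases y with y | y <;> simp

lemma aux_submatrix_skew {κ γ : Type*} (Y : Matrix κ κ ℂ) (hY : Yᵀ = -Y) (e : γ → κ) :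
    (Y.submatrix e e)ᵀ = -(Y.submatrix e e) := by
  rw [Matrix.transpose_submatrix, hY]
  ext x y
  simp


end Helpers -- close
end AuxLemmas

/-- For `0 ≤ 2i ≤ n`, the closure in `Mat_n(ℂ)` of the set of
skew-symmetric matrices of rank exactly `2i` is the set of skew-symmetric matrices
of rank at most `2i`. -/
theorem closure_skew_rank_stratum (n i : ℕ) (hi : 2 * i ≤ n) :
    closure {M : Matrix (Fin n) (Fin n) ℂ | Mᵀ = -M ∧ M.rank = 2 * i} =
      {M : Matrix (Fin n) (Fin n) ℂ | Mᵀ = -M ∧ M.rank ≤ 2 * i} := by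
  apply Set.Subset.antisymm
  · apply closure_minimal
    · exact fun M hM => ⟨hM.1, le_of_eq hM.2⟩
    · have : {M : Matrix (Fin n) (Fin n) ℂ | Mᵀ = -M ∧ M.rank ≤ 2 * i}
          = {M : Matrix (Fin n) (Fin n) ℂ | Mᵀ = -M}
            ∩ {M : Matrix (Fin n) (Fin n) ℂ | M.rank ≤ 2 * i} := rfl
      rw [this]
      exact (isClosed_eq continuous_id.matrix_transpose continuous_id.neg).inter
        (aux_isClosed_rank_le n (2 * i))
  · rintro M ⟨hskew, hrank⟩
    classical
    set r := M.rank with hr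
    have hrn : r ≤ n := by simpa using M.rank_le_card_width
    set W := LinearMap.ker M.mulVecLin with hWdef
    have hWdim : Module.finrank ℂ W = n - r := by
      have h0 := LinearMap.finrank_range_add_finrank_ker M.mulVecLin
      rw [← hWdef] at h0
      rw [show Module.finrank ℂ (LinearMap.range M.mulVecLin) = r from rfl] at h0
      rw [show Module.finrank ℂ (Fin n → ℂ) = n by simp] at h0
      omega
    obtain ⟨U, hUW⟩ := Submodule.exists_isCompl W
    have hUdim : Module.finrank ℂ U = r := by
      have h0 := Submodule.finrank_add_eq_of_isCompl hUW
      rw [show Module.finrank ℂ (Fin n → ℂ) = n by simp] at h0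
      omega
    set s := n - r with hs
    have hsr : r + s = n := by omega
    let bU : Module.Basis (Fin r) ℂ U := (Module.finBasis ℂ U).reindex (finCongr (by rw [hUdim]))
    let bW : Module.Basis (Fin s) ℂ W := (Module.finBasis ℂ W).reindex (finCongr (by rw [hWdim]))
    let b : Module.Basis (Fin r ⊕ Fin s) ℂ (Fin n → ℂ) :=
      (bU.prod bW).map (Submodule.prodEquivOfIsCompl U W hUW.symm)
    have hbker : ∀ j : Fin s, M *ᵥ (b (Sum.inr j)) = 0 := by
      intro j
      have hmem : b (Sum.inr j) ∈ W := by
        have h1 : (bU.prod bW) (Sum.inr j) = (0, bW j) := by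
          ext
          · simp [Module.Basis.prod_apply_inr_fst]
          · simp [Module.Basis.prod_apply_inr_snd]
        simp only [b, Module.Basis.map_apply, h1]
        rw [Submodule.coe_prodEquivOfIsCompl']
        simp
      simpa [hWdef, Matrix.mulVecLin_apply] using hmem
    let ι : (Fin r ⊕ Fin s) ≃ Fin n := finSumFinEquiv.trans (finCongr hsr)
    let c : Module.Basis (Fin n) ℂ (Fin n → ℂ) := b.reindex ι
    let P : Matrix (Fin n) (Fin n) ℂ := (Pi.basisFun ℂ (Fin n)).toMatrix c
    have hPdet : IsUnit P.det := by
      letI := Module.Basis.invertibleToMatrix (Pi.basisFun ℂ (Fin n)) c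
      exact P.isUnit_det_of_invertible
    have hP : ∀ a k, P a k = c k a := by
      intro a k
      simp [P, Module.Basis.toMatrix_apply]
    set A := Pᵀ * M * P with hA
    have hAentry : ∀ k l, A k l = c k ⬝ᵥ (M *ᵥ c l) := by
      intro k l
      simp only [hA, Matrix.mul_apply, Matrix.transpose_apply, hP, dotProduct,
        Matrix.mulVec, Finset.sum_mul, Finset.mul_sum]
      rw [Finset.sum_comm]
      apply Finset.sum_congr rfl
      intro a _
      apply Finset.sum_congr rfl
      intro bb _
      ring
    have hAcolzero : ∀ k (j : Fin s), A k (ι (Sum.inr j)) = 0 := by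
      intro k j
      rw [hAentry]
      have hc : c (ι (Sum.inr j)) = b (Sum.inr j) := by simp [c]
      rw [hc, hbker j, dotProduct_zero]
    have hAskew : Aᵀ = -A := by
      rw [hA, Matrix.transpose_mul, Matrix.transpose_mul, Matrix.transpose_transpose, hskew]
      simp [Matrix.mul_assoc]
    have hArank : A.rank = r := by
      rw [hA, Matrix.rank_mul_eq_left_of_isUnit_det _ _ hPdet,
        Matrix.rank_mul_eq_right_of_isUnit_det _ _ (by simpa [Matrix.det_transpose] using hPdet)]
    set A' := A.submatrix ι ι with hA'def
    set A₁ := A'.toBlocks₁₁ with hA₁def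
    have hA'block : A' = fromBlocks A₁ 0 0 0 := by
      ext x y
      rcases x with x | x <;> rcases y with y | y
      · simp [hA₁def, Matrix.toBlocks₁₁]
      · simp only [Matrix.fromBlocks_apply₁₂, Matrix.zero_apply, hA'def, Matrix.submatrix_apply]
        exact hAcolzero _ y
      · simp only [Matrix.fromBlocks_apply₂₁, Matrix.zero_apply, hA'def, Matrix.submatrix_apply]
        have h := congrFun (congrFun hAskew (ι (Sum.inl y))) (ι (Sum.inr x))
        simp only [Matrix.transpose_apply, Matrix.neg_apply] at h
        rw [h, hAcolzero, neg_zero]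
      · simp only [Matrix.fromBlocks_apply₂₂, Matrix.zero_apply, hA'def, Matrix.submatrix_apply]
        exact hAcolzero _ y
    have hA₁rank : A₁.rank = r := by
      have h1 : A'.rank = r := by rw [hA'def, Matrix.rank_submatrix]; exact hArank
      rw [hA'block, aux_rank_fromBlocks_diag, Matrix.rank_zero, add_zero] at h1
      exact h1
    have hA₁skew : A₁ᵀ = -A₁ := by
      ext p q
      exact congrFun (congrFun hAskew (ι (Sum.inl p))) (ι (Sum.inl q))
    have hdetA₁ : IsUnit A₁.det :=
      aux_isUnit_det_of_rank_eq_card _ (by simp [hA₁rank])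
    have hEvenr : Even r := by
      have hd : A₁.det ≠ 0 := hdetA₁.ne_zero
      have h1 : A₁.det = (-1 : ℂ) ^ r * A₁.det := by
        conv_lhs => rw [← Matrix.det_transpose A₁, hA₁skew]
        rw [show -A₁ = (-1 : ℂ) • A₁ by simp, Matrix.det_smul, Fintype.card_fin]
      have h2 : ((-1 : ℂ)) ^ r = 1 := by
        have h3 : A₁.det * (-1 : ℂ) ^ r = A₁.det := by rw [mul_comm]; exact h1.symm
        rcases mul_right_eq_self₀.mp h3 with h | h
        · exact h
        · exact absurd h hd
      exact (neg_one_pow_eq_one_iff_even (by norm_num : (-1 : ℂ) ≠ 1)).mp h2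
    obtain ⟨jj, hjj⟩ := hEvenr
    have hji : jj ≤ i := by omega
    set m := i - jj with hm
    have hmr : r + 2 * m = 2 * i := by omega
    have h2ms : 2 * m ≤ s := by omega
    let e₂ : Fin s ≃ ((Fin m ⊕ Fin m) ⊕ Fin (s - 2 * m)) :=
      (finCongr (by omega : s = (m + m) + (s - 2 * m))).trans
        (finSumFinEquiv.symm.trans (Equiv.sumCongr finSumFinEquiv.symm (Equiv.refl _)))
    let G : Matrix (Fin s) (Fin s) ℂ :=
      (fromBlocks (Matrix.J (Fin m) ℂ) 0 0 (0 : Matrix (Fin (s - 2*m)) (Fin (s - 2*m)) ℂ)).submatrix e₂ e₂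
    have hGskew : Gᵀ = -G :=
      aux_submatrix_skew _ (aux_fromBlocks_skew _ _ (Matrix.J_transpose _ _) (by simp)) _
    have hGrank : G.rank = 2 * m := by
      have hJu : IsUnit (Matrix.J (Fin m) ℂ) :=
        (Matrix.isUnit_iff_isUnit_det _).mpr (Matrix.isUnit_det_J _ _)
      rw [show G = (fromBlocks (Matrix.J (Fin m) ℂ) 0 0
          (0 : Matrix (Fin (s - 2*m)) (Fin (s - 2*m)) ℂ)).submatrix e₂ e₂ from rfl,
        Matrix.rank_submatrix, aux_rank_fromBlocks_diag, Matrix.rank_zero, add_zero,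
        Matrix.rank_of_isUnit _ hJu]
      simp
      omega
    let D₀ : Matrix (Fin r ⊕ Fin s) (Fin r ⊕ Fin s) ℂ := fromBlocks 0 0 0 G
    let Dm : Matrix (Fin n) (Fin n) ℂ := D₀.submatrix ι.symm ι.symm
    let Q : Matrix (Fin n) (Fin n) ℂ := P⁻¹
    have hPQ : P * Q = 1 := Matrix.mul_nonsing_inv _ hPdet
    have hQdet : IsUnit Q.det := P.isUnit_nonsing_inv_det hPdet
    let N : Matrix (Fin n) (Fin n) ℂ := Qᵀ * Dm * Q
    have hMA : M = Qᵀ * A * Q := by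
      have h1 : Qᵀ * (Pᵀ * M * P) * Q = (Qᵀ * Pᵀ) * M * (P * Q) := by
        simp [Matrix.mul_assoc]
      rw [hA, h1, ← Matrix.transpose_mul, hPQ, Matrix.transpose_one, Matrix.one_mul,
        Matrix.mul_one]
    have key : ∀ ε : ℂ, M + ε • N = Qᵀ * (A + ε • Dm) * Q := by
      intro ε
      rw [Matrix.mul_add, Matrix.add_mul, ← hMA]
      congr 1
      rw [Matrix.mul_smul, Matrix.smul_mul]
    have hDmskew : Dmᵀ = -Dm :=
      aux_submatrix_skew _ (aux_fromBlocks_skew _ _ (by simp) hGskew) _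
    have hrankε : ∀ ε : ℂ, ε ≠ 0 → (M + ε • N).rank = 2 * i := by
      intro ε hε
      rw [key ε, Matrix.rank_mul_eq_left_of_isUnit_det _ _ hQdet,
        Matrix.rank_mul_eq_right_of_isUnit_det _ _
          (by simpa [Matrix.det_transpose] using hQdet)]
      have hA2 : A = (fromBlocks A₁ 0 0 0).submatrix ι.symm ι.symm := by
        rw [← hA'block, hA'def]
        simp [Matrix.submatrix_submatrix]
      have hsub : A + ε • Dm = (fromBlocks A₁ 0 0 (ε • G)).submatrix ι.symm ι.symm := by
        rw [hA2]
        ext x y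
        rcases h' : ι.symm x with x' | x' <;> rcases h'' : ι.symm y with y' | y' <;>
          simp [Dm, D₀, Matrix.submatrix_apply, h', h'', Matrix.fromBlocks_apply₁₁,
            Matrix.fromBlocks_apply₁₂, Matrix.fromBlocks_apply₂₁, Matrix.fromBlocks_apply₂₂]
      rw [hsub, Matrix.rank_submatrix, aux_rank_fromBlocks_diag, hA₁rank]
      have hεG : (ε • G).rank = 2 * m := by
        have h1 : ε • G = (ε • (1 : Matrix (Fin s) (Fin s) ℂ)) * G := by
          rw [Matrix.smul_mul, Matrix.one_mul]
        rw [h1, Matrix.rank_mul_eq_right_of_isUnit_det _ _ ?_, hGrank]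
        rw [Matrix.det_smul, Matrix.det_one, mul_one, Fintype.card_fin]
        exact isUnit_iff_ne_zero.mpr (pow_ne_zero _ hε)
      rw [hεG]
      omega
    have hskewε : ∀ ε : ℂ, (M + ε • N)ᵀ = -(M + ε • N) := by
      intro ε
      have hNskew : Nᵀ = -N := by
        show (Qᵀ * Dm * Q)ᵀ = _
        rw [Matrix.transpose_mul, Matrix.transpose_mul, Matrix.transpose_transpose, hDmskew]
        rw [Matrix.neg_mul, Matrix.mul_neg, ← Matrix.mul_assoc]
      rw [Matrix.transpose_add, hskew, Matrix.transpose_smul, hNskew, smul_neg, neg_add]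
    have hT : Filter.Tendsto (fun ε : ℂ => M + ε • N) (nhdsWithin 0 {(0:ℂ)}ᶜ) (nhds M) := by
      have hc : Continuous fun ε : ℂ => M + ε • N :=
        continuous_const.add (continuous_id.smul continuous_const)
      have h0 := hc.tendsto 0
      simp only [zero_smul, add_zero] at h0
      exact h0.mono_left nhdsWithin_le_nhds
    refine mem_closure_of_tendsto hT ?_
    filter_upwards [self_mem_nhdsWithin] with ε hε
    exact ⟨hskewε ε, hrankε ε hε⟩
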